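/- For every Z-error E on the two-dimensional toric code and every subset R ⊆ (ZMod L)², the sum Σ_{v ∈ R} σ(E)(v) of star syndromes over R equals, in ZMod 2, the sum of E over the edges having exactly one endpoint in R, i.e. Σ over pairs (p, i) with exactly one of p, p + e_i in R of E(p, i). In particular, taking R to be all of (ZMod L)², the total number of star defects is even (the product of all star operators is the identity). (The generalized Gauss law of the toric code: the parity of e-excitations within a region equals the eigenvalue of an X-string operator on its boundary.) -/

import Mathlib

/-- Positions (vertices) of the periodic square lattice of linear size `L`. -/
abbrev V2 (L : ℕ) : Type := Fin 2 → ZMod L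

/-- The standard basis vector of the 2-torus in direction `i`. -/
def e2 (L : ℕ) (i : Fin 2) : V2 L := Pi.single i 1

/-- The star syndrome of a Z-error `E` of the toric code at the vertex `v`. -/
def starSyn (L : ℕ) (E : V2 L × Fin 2 → ZMod 2) (v : V2 L) : ZMod 2 :=
  E (v, 0) + E (v, 1) + E (v - e2 L 0, 0) + E (v - e2 L 1, 1)

lemma ite_add_xor (a b : Prop) [Decidable a] [Decidable b] (x : ZMod 2) :
    ((if a then x else 0) + if b then x else 0) = if Xor a b then x else 0 := by
  split_ifs with h1 h2 h3 h3 <;> simp_all [Xor, CharTwo.add_self_eq_zero]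

lemma gauss (L : ℕ) [NeZero L] (E : V2 L × Fin 2 → ZMod 2) (R : Finset (V2 L)) :
    ∑ v ∈ R, starSyn L E v =
      ∑ f ∈ Finset.univ.filter
        (fun f : V2 L × Fin 2 => Xor (f.1 ∈ R) (f.1 + e2 L f.2 ∈ R)), E f := by
  classical
  have hshift : ∀ i : Fin 2,
      (∑ v : V2 L, if v ∈ R then E (v - e2 L i, i) else 0) =
        ∑ p : V2 L, if p + e2 L i ∈ R then E (p, i) else 0 := by
    intro i
    refine Fintype.sum_equiv (Equiv.subRight (e2 L i)) _ _ ?_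
    intro v
    simp [Equiv.subRight, sub_add_cancel]
  have expand : ∀ v : V2 L, (if v ∈ R then starSyn L E v else 0)
      = (if v ∈ R then E (v, 0) else 0) + (if v ∈ R then E (v, 1) else 0)
        + (if v ∈ R then E (v - e2 L 0, 0) else 0)
        + (if v ∈ R then E (v - e2 L 1, 1) else 0) := by
    intro v; by_cases h : v ∈ R <;> simp [h, starSyn]
  calc ∑ v ∈ R, starSyn L E v
      = ∑ v : V2 L, if v ∈ R then starSyn L E v else 0 := by
        rw [Finset.sum_ite_mem, Finset.univ_inter]
    _ = (∑ v : V2 L, if v ∈ R then E (v, 0) else 0)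
        + (∑ v : V2 L, if v ∈ R then E (v, 1) else 0)
        + (∑ v : V2 L, if v ∈ R then E (v - e2 L 0, 0) else 0)
        + (∑ v : V2 L, if v ∈ R then E (v - e2 L 1, 1) else 0) := by
        simp_rw [expand, Finset.sum_add_distrib]
    _ = ∑ p : V2 L,
        ((if Xor (p ∈ R) (p + e2 L 0 ∈ R) then E (p, 0) else 0)
          + (if Xor (p ∈ R) (p + e2 L 1 ∈ R) then E (p, 1) else 0)) := by
        rw [hshift 0, hshift 1, ← Finset.sum_add_distrib, ← Finset.sum_add_distrib,
          ← Finset.sum_add_distrib]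
        refine Finset.sum_congr rfl fun p _ => ?_
        rw [← ite_add_xor, ← ite_add_xor]
        ring
    _ = ∑ f ∈ Finset.univ.filter
        (fun f : V2 L × Fin 2 => Xor (f.1 ∈ R) (f.1 + e2 L f.2 ∈ R)), E f := by
        rw [Finset.sum_filter, Fintype.sum_prod_type]
        refine Finset.sum_congr rfl fun p _ => ?_
        rw [Fin.sum_univ_two]

theorem stmt_16 (L : ℕ) [NeZero L] (hL : 2 ≤ L)
    (E : V2 L × Fin 2 → ZMod 2) (R : Finset (V2 L)) :
    (∑ v ∈ R, starSyn L E v =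
      ∑ f ∈ Finset.univ.filter
        (fun f : V2 L × Fin 2 => Xor (f.1 ∈ R) (f.1 + e2 L f.2 ∈ R)), E f) ∧
    Even ((Finset.univ.filter (fun v : V2 L => starSyn L E v = 1)).card) := by
  refine ⟨gauss L E R, ?_⟩
  have h0 : ∑ v : V2 L, starSyn L E v = 0 := by
    have := gauss L E Finset.univ
    simpa [Xor] using this
  have hcard : ((Finset.univ.filter (fun v : V2 L => starSyn L E v = 1)).card : ZMod 2) = 0 := by
    rw [← h0]
    rw [Finset.card_filter, Nat.cast_sum]
    refine (Finset.sum_congr rfl fun v _ => ?_).symm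
    have h01 : ∀ x : ZMod 2, x = 0 ∨ x = 1 := by decide
    have := h01 (starSyn L E v)
    rcases this with h | h <;> simp [h]
  rcases (ZMod.natCast_eq_zero_iff _ 2).mp hcard with ⟨k, hk⟩
  exact ⟨k, by omega⟩
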